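/- arXiv:2003.12334 — 3 statements merged into one kernel-verified Lean document; each statement's English description precedes it below -/
import Mathlib

section
/- Let k(t,s) = (1/(m!)²) ∫_0^{s∧t} (s−ξ)^m (t−ξ)^m dξ be the covariance of the m-fold integrated Brownian motion. Then for every T > 0, lim_{ε→0} (k(T+εt,T+εs) − k(T+εt,T) − k(T+εs,T) + k(T,T)) / ε² = (1/(m!)²) (m²/(2m−1)) T^{2m−1} s t, uniformly for (t,s) ∈ [0,1]². -/
set_option maxHeartbeats 1000000

open MeasureTheory Set Filter


/-- Taylor-type bound for `x ↦ x^(n+1)` on nonnegative reals. -/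
lemma ibm_taylor (M : ℝ) (hM : 1 ≤ M) (n : ℕ) : ∀ (y h : ℝ), 0 ≤ y → 0 ≤ h → y + h ≤ M →
    |(y+h)^(n+1) - y^(n+1) - ((n:ℝ)+1)*h*y^n| ≤ h^2 * ((n:ℝ)+1)^2 * M^(n+1) := by
  induction n with
  | zero =>
    intro y h hy hh hyh
    push_cast
    rw [show (y+h)^(0+1) - y^(0+1) - ((0:ℝ)+1)*h*y^0 = 0 by ring]
    simp only [abs_zero]
    positivity
  | succ n ih =>
    intro y h hy hh hyh
    have hD := ih y h hy hh hyh
    push_cast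
    have hidentity : (y+h)^(n+1+1) - y^(n+1+1) - ((n:ℝ)+1+1)*h*y^(n+1)
        = (y+h) * ((y+h)^(n+1) - y^(n+1) - ((n:ℝ)+1)*h*y^n) + ((n:ℝ)+1)*h^2*y^n := by
      ring
    have hyM : y ≤ M := by linarith
    have hyn : y^n ≤ M^n := pow_le_pow_left₀ hy hyM n
    have hMn1 : M^n ≤ M^(n+1) := pow_le_pow_right₀ (by linarith) (by omega)
    have hMn2 : M^(n+1) ≤ M^(n+1+1) := pow_le_pow_right₀ (by linarith) (by omega)
    have h1 : |(y+h) * ((y+h)^(n+1) - y^(n+1) - ((n:ℝ)+1)*h*y^n)|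
        ≤ M * (h^2 * ((n:ℝ)+1)^2 * M^(n+1)) := by
      rw [abs_mul]
      apply mul_le_mul (by rw [abs_of_nonneg (by linarith)]; linarith) hD (abs_nonneg _)
        (by linarith)
    calc |(y+h)^(n+1+1) - y^(n+1+1) - ((n:ℝ)+1+1)*h*y^(n+1)|
        ≤ M * (h^2 * ((n:ℝ)+1)^2 * M^(n+1)) + ((n:ℝ)+1)*h^2*y^n := by
          rw [hidentity]
          refine (abs_add_le _ _).trans ?_
          gcongr
          · rw [abs_of_nonneg (by positivity)]
      _ ≤ h^2 * ((n:ℝ)+1+1)^2 * M^(n+1+1) := by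
          have h2 : y^n ≤ M^(n+1+1) := hyn.trans (hMn1.trans hMn2)
          have h3 : M * (h^2 * ((n:ℝ)+1)^2 * M^(n+1)) = h^2 * ((n:ℝ)+1)^2 * M^(n+1+1) := by
            rw [pow_succ]; ring
          rw [h3]
          have hM2 : (0:ℝ) ≤ h^2 * M^(n+1+1) := by positivity
          have h4 : ((n:ℝ)+1)*h^2*y^n ≤ ((n:ℝ)+1)*h^2*M^(n+1+1) :=
            mul_le_mul_of_nonneg_left h2 (by positivity)
          have h5 : (((n:ℝ)+1)^2+(((n:ℝ)+1))) * (h^2 * M^(n+1+1))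
              ≤ ((n:ℝ)+1+1)^2 * (h^2 * M^(n+1+1)) :=
            mul_le_mul_of_nonneg_right (by nlinarith [Nat.cast_nonneg (α := ℝ) n]) hM2
          nlinarith [h4, h5]

lemma ibm_int_pow (T : ℝ) (hT : 0 ≤ T) (n : ℕ) :
    ∫ ξ in Ioc (0:ℝ) T, (T - ξ)^n = T^(n+1)/(n+1) := by
  rw [← intervalIntegral.integral_of_le hT,
    intervalIntegral.integral_comp_sub_left (fun u => u ^ n) T]
  simp [integral_pow]

/-- **Asymptotic covariance of rescaled increments of the `m`-fold integrated Brownian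
motion.** With `k(t,s) = (1/(m!)²) ∫_0^{s∧t} (s-ξ)^m (t-ξ)^m dξ`, for every `T > 0`,
`(k(T+εt,T+εs) - k(T+εt,T) - k(T+εs,T) + k(T,T))/ε² → (1/(m!)²)(m²/(2m-1)) T^{2m-1} s t`
as `ε → 0⁺`, uniformly for `(t,s) ∈ [0,1]²`. -/
theorem iterated_bm_asymptotic_covariance
    (m : ℕ) (hm : 1 ≤ m)
    (k : ℝ → ℝ → ℝ)
    (hk : ∀ t s, k t s = (1 / ((m.factorial : ℝ)) ^ 2) *
      ∫ ξ in Ioc (0:ℝ) (min s t), (s - ξ) ^ m * (t - ξ) ^ m)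
    (T : ℝ) (hT : 0 < T) :
    TendstoUniformlyOn
      (fun ε (p : ℝ × ℝ) =>
        (k (T + ε * p.1) (T + ε * p.2) - k (T + ε * p.1) T - k (T + ε * p.2) T + k T T) / ε ^ 2)
      (fun p => (1 / ((m.factorial : ℝ)) ^ 2) * ((m : ℝ) ^ 2 / (2 * (m : ℝ) - 1)) *
        T ^ (2 * m - 1) * p.2 * p.1)
      (nhdsWithin 0 (Ioi 0)) (Icc (0:ℝ) 1 ×ˢ Icc (0:ℝ) 1) := by
  obtain ⟨n, rfl⟩ : ∃ n, m = n + 1 := ⟨m - 1, (Nat.succ_pred_eq_of_pos hm).symm⟩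
  set c0 : ℝ := 1 / ((Nat.factorial (n+1) : ℝ)) ^ 2 with hc0def
  have hfacpos : (0:ℝ) < (Nat.factorial (n+1) : ℝ) := by positivity
  have hc0pos : 0 < c0 := by rw [hc0def]; positivity
  set M : ℝ := T + 1 with hMdef
  have hM1 : (1:ℝ) ≤ M := by rw [hMdef]; linarith
  have hM0 : (0:ℝ) ≤ M := by linarith
  set C1 : ℝ := 3 * ((n:ℝ)+1)^4 * M^(2*n+2) with hC1def
  have hC1pos : 0 < C1 := by rw [hC1def]; positivity
  set C2 : ℝ := c0 * (C1 * T + 1) with hC2def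
  have hC2pos : 0 < C2 := by rw [hC2def]; positivity
  -- continuity / integrability helpers
  have contf : ∀ (A B : ℝ), Continuous (fun ξ : ℝ => (A - ξ)^(n+1) * (B - ξ)^(n+1)) := by
    intro A B; fun_prop
  have intf : ∀ (A B u v : ℝ),
      IntegrableOn (fun ξ : ℝ => (A - ξ)^(n+1) * (B - ξ)^(n+1)) (Ioc u v) volume :=
    fun A B u v => (contf A B).integrableOn_Ioc
  rw [Metric.tendstoUniformlyOn_iff]
  intro δ hδ
  have hδ0 : 0 < min 1 (δ / (C2 + 1)) := lt_min one_pos (by positivity)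
  filter_upwards [Ioo_mem_nhdsGT_of_mem (⟨le_refl (0:ℝ), hδ0⟩ : (0:ℝ) ∈ Ico (0:ℝ) _)]
    with ε hεmem
  obtain ⟨hε0, hεδ⟩ := hεmem
  have hε1 : ε ≤ 1 := le_of_lt (lt_of_lt_of_le hεδ (min_le_left _ _))
  have hεδ' : ε < δ / (C2 + 1) := lt_of_lt_of_le hεδ (min_le_right _ _)
  have hεne : ε ≠ 0 := ne_of_gt hε0
  have main : ∀ t s : ℝ, 0 ≤ t → t ≤ 1 → 0 ≤ s → s ≤ 1 →
      |c0 * (((n+1:ℕ):ℝ)^2 / (2*((n+1:ℕ):ℝ) - 1)) * T^(2*(n+1)-1) * s * t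
        - (k (T+ε*t) (T+ε*s) - k (T+ε*t) T - k (T+ε*s) T + k T T)/ε^2| < δ := by
    intro t s ht0 ht1 hs0 hs1
    have hεt : 0 ≤ ε * t := mul_nonneg hε0.le ht0
    have hεs : 0 ≤ ε * s := mul_nonneg hε0.le hs0
    have hεs1 : ε * s ≤ ε := mul_le_of_le_one_right hε0.le hs1
    have hεt1 : ε * t ≤ ε := mul_le_of_le_one_right hε0.le ht1
    set r : ℝ := min s t with hrdef
    have hr0 : 0 ≤ r := le_min hs0 ht0
    have hrs : r ≤ s := min_le_left _ _
    have hrt : r ≤ t := min_le_right _ _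
    have hr1 : r ≤ 1 := hrs.trans hs1
    have hεr0 : 0 ≤ ε * r := mul_nonneg hε0.le hr0
    have hεrs : ε * r ≤ ε * s := mul_le_mul_of_nonneg_left hrs hε0.le
    have hεrt : ε * r ≤ ε * t := mul_le_mul_of_nonneg_left hrt hε0.le
    have hTa : T ≤ T + ε * t := by linarith
    have hTb : T ≤ T + ε * s := by linarith
    have hTc : T ≤ T + ε * r := by linarith
    have hminba : min (T + ε * s) (T + ε * t) = T + ε * r := by
      rcases le_total s t with h | h
      · have := mul_le_mul_of_nonneg_left h hε0.le
        rw [min_eq_left (by linarith), show r = s from min_eq_left h]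
      · have := mul_le_mul_of_nonneg_left h hε0.le
        rw [min_eq_right (by linarith), show r = t from min_eq_right h]
    -- pointwise bound on Ioc 0 T
    have hpt : ∀ ξ ∈ Ioc (0:ℝ) T,
        ‖((T+ε*s-ξ)^(n+1) - (T-ξ)^(n+1)) * ((T+ε*t-ξ)^(n+1) - (T-ξ)^(n+1))
          - ((n:ℝ)+1)^2 * ε^2 * t * s * ((T-ξ)^(2*n))‖ ≤ C1 * ε^3 := by
      intro ξ hξ
      obtain ⟨hξ0, hξT⟩ := hξ
      set y : ℝ := T - ξ with hydef
      have hy0 : 0 ≤ y := by rw [hydef]; linarith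
      have hyT : y ≤ T := by rw [hydef]; linarith
      have hys : y + ε * s ≤ M := by rw [hMdef]; linarith
      have hyt : y + ε * t ≤ M := by rw [hMdef]; linarith
      have hD1 := ibm_taylor M hM1 n y (ε*s) hy0 hεs hys
      have hD2 := ibm_taylor M hM1 n y (ε*t) hy0 hεt hyt
      set D1 : ℝ := (y+ε*s)^(n+1) - y^(n+1) - ((n:ℝ)+1)*(ε*s)*y^n with hD1def
      set D2 : ℝ := (y+ε*t)^(n+1) - y^(n+1) - ((n:ℝ)+1)*(ε*t)*y^n with hD2def
      have hbs : T + ε*s - ξ = y + ε*s := by rw [hydef]; ring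
      have hbt : T + ε*t - ξ = y + ε*t := by rw [hydef]; ring
      have hid : ((T+ε*s-ξ)^(n+1) - (T-ξ)^(n+1)) * ((T+ε*t-ξ)^(n+1) - (T-ξ)^(n+1))
          - ((n:ℝ)+1)^2 * ε^2 * t * s * ((T-ξ)^(2*n))
          = D1*D2 + D1*(((n:ℝ)+1)*(ε*t)*y^n) + D2*(((n:ℝ)+1)*(ε*s)*y^n) := by
        rw [hbs, hbt, ← hydef, show 2*n = n + n from by omega, pow_add, hD1def, hD2def]
        ring
      have hyn : y^n ≤ M^n := pow_le_pow_left₀ hy0 (by linarith) n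
      have hP1 : |D1| ≤ ε^2 * ((n:ℝ)+1)^2 * M^(n+1) := by
        refine hD1.trans ?_
        have : (ε*s)^2 ≤ ε^2 := pow_le_pow_left₀ hεs hεs1 2
        gcongr
      have hP2 : |D2| ≤ ε^2 * ((n:ℝ)+1)^2 * M^(n+1) := by
        refine hD2.trans ?_
        have : (ε*t)^2 ≤ ε^2 := pow_le_pow_left₀ hεt hεt1 2
        gcongr
      have hQ1 : |((n:ℝ)+1)*(ε*s)*y^n| ≤ ((n:ℝ)+1) * ε * M^n := by
        rw [abs_of_nonneg (by positivity)]
        have : ε * s ≤ ε := hεs1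
        gcongr
      have hQ2 : |((n:ℝ)+1)*(ε*t)*y^n| ≤ ((n:ℝ)+1) * ε * M^n := by
        rw [abs_of_nonneg (by positivity)]
        have : ε * t ≤ ε := hεt1
        gcongr
      rw [Real.norm_eq_abs, hid]
      set P : ℝ := ε^2 * ((n:ℝ)+1)^2 * M^(n+1) with hPdef
      set Q : ℝ := ((n:ℝ)+1) * ε * M^n with hQdef
      have hPnn : 0 ≤ P := by rw [hPdef]; positivity
      have hQnn : 0 ≤ Q := by rw [hQdef]; positivity
      have step1 : |D1*D2 + D1*(((n:ℝ)+1)*(ε*t)*y^n) + D2*(((n:ℝ)+1)*(ε*s)*y^n)|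
          ≤ P*P + P*Q + P*Q := by
        refine (abs_add_le _ _).trans ?_
        refine add_le_add ((abs_add_le _ _).trans (add_le_add ?_ ?_)) ?_
        · rw [abs_mul]; exact mul_le_mul hP1 hP2 (abs_nonneg _) hPnn
        · rw [abs_mul]; exact mul_le_mul hP1 hQ2 (abs_nonneg _) hPnn
        · rw [abs_mul]; exact mul_le_mul hP2 hQ1 (abs_nonneg _) hPnn
      refine step1.trans ?_
      have hPP : P*P = ε^4 * (((n:ℝ)+1)^4 * M^(2*n+2)) := by
        rw [hPdef, show 2*n+2 = (n+1)+(n+1) from by omega, pow_add]; ring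
      have hPQ : P*Q = ε^3 * (((n:ℝ)+1)^3 * M^(2*n+1)) := by
        rw [hPdef, hQdef, show 2*n+1 = (n+1)+n from by omega, pow_add]; ring
      rw [hPP, hPQ, hC1def]
      have he43 : ε^4 ≤ ε^3 := pow_le_pow_of_le_one hε0.le hε1 (by omega)
      have hM12 : M^(2*n+1) ≤ M^(2*n+2) := pow_le_pow_right₀ hM1 (by omega)
      have hn34 : ((n:ℝ)+1)^3 ≤ ((n:ℝ)+1)^4 :=
        pow_le_pow_right₀ (by have := Nat.cast_nonneg (α := ℝ) n; linarith) (by omega)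
      calc ε^4 * (((n:ℝ)+1)^4 * M^(2*n+2)) + ε^3 * (((n:ℝ)+1)^3 * M^(2*n+1))
            + ε^3 * (((n:ℝ)+1)^3 * M^(2*n+1))
          ≤ ε^3 * (((n:ℝ)+1)^4 * M^(2*n+2)) + ε^3 * (((n:ℝ)+1)^4 * M^(2*n+2))
            + ε^3 * (((n:ℝ)+1)^4 * M^(2*n+2)) := by
            gcongr <;> positivity
        _ = 3 * ((n:ℝ)+1)^4 * M^(2*n+2) * ε^3 := by ring
    -- the integral of the model
    have h_model : ∫ ξ in Ioc (0:ℝ) T, ((n:ℝ)+1)^2 * ε^2 * t * s * ((T-ξ)^(2*n))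
        = ((n:ℝ)+1)^2 * ε^2 * t * s * (T^(2*n+1) / (2*(n:ℝ)+1)) := by
      rw [integral_const_mul, ibm_int_pow T hT.le (2*n)]
      norm_num
    -- split the long integral
    have h_split : ∫ ξ in Ioc (0:ℝ) (T + ε*r), (T+ε*s-ξ)^(n+1) * (T+ε*t-ξ)^(n+1)
        = (∫ ξ in Ioc (0:ℝ) T, (T+ε*s-ξ)^(n+1) * (T+ε*t-ξ)^(n+1))
          + ∫ ξ in Ioc T (T + ε*r), (T+ε*s-ξ)^(n+1) * (T+ε*t-ξ)^(n+1) := by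
      rw [← Ioc_union_Ioc_eq_Ioc hT.le hTc,
        setIntegral_union (Ioc_disjoint_Ioc_of_le le_rfl) measurableSet_Ioc
          (intf _ _ _ _) (intf _ _ _ _)]
    -- combine the four integrals over Ioc 0 T
    have h_comb : ∫ ξ in Ioc (0:ℝ) T,
          ((T+ε*s-ξ)^(n+1) - (T-ξ)^(n+1)) * ((T+ε*t-ξ)^(n+1) - (T-ξ)^(n+1))
        = (∫ ξ in Ioc (0:ℝ) T, (T+ε*s-ξ)^(n+1) * (T+ε*t-ξ)^(n+1))
          - (∫ ξ in Ioc (0:ℝ) T, (T-ξ)^(n+1) * (T+ε*t-ξ)^(n+1))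
          - (∫ ξ in Ioc (0:ℝ) T, (T-ξ)^(n+1) * (T+ε*s-ξ)^(n+1))
          + ∫ ξ in Ioc (0:ℝ) T, (T-ξ)^(n+1) * (T-ξ)^(n+1) := by
      have i1 := intf (T+ε*s) (T+ε*t) 0 T
      have i2 := intf T (T+ε*t) 0 T
      have i3 := intf T (T+ε*s) 0 T
      have i4 := intf T T 0 T
      have i12 : IntegrableOn (fun ξ : ℝ => (T+ε*s-ξ)^(n+1) * (T+ε*t-ξ)^(n+1)
          - (T-ξ)^(n+1) * (T+ε*t-ξ)^(n+1)) (Ioc 0 T) volume := i1.sub i2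
      have i123 : IntegrableOn (fun ξ : ℝ => (T+ε*s-ξ)^(n+1) * (T+ε*t-ξ)^(n+1)
          - (T-ξ)^(n+1) * (T+ε*t-ξ)^(n+1) - (T-ξ)^(n+1) * (T+ε*s-ξ)^(n+1))
          (Ioc 0 T) volume := i12.sub i3
      rw [← integral_sub i1 i2, ← integral_sub i12 i3, ← integral_add i123 i4]
      congr 1
      funext ξ
      ring
    -- bound on the short integral
    have h_I2 : ‖∫ ξ in Ioc T (T + ε*r), (T+ε*s-ξ)^(n+1) * (T+ε*t-ξ)^(n+1)‖ ≤ ε^3 := by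
      have hb : ∀ ξ ∈ Ioc T (T + ε*r),
          ‖(T+ε*s-ξ)^(n+1) * (T+ε*t-ξ)^(n+1)‖ ≤ ε^(2*n+2) := by
        intro ξ hξ
        obtain ⟨hξ1, hξ2⟩ := hξ
        have h1 : 0 ≤ T+ε*s-ξ := by linarith
        have h2 : 0 ≤ T+ε*t-ξ := by linarith
        have h3 : T+ε*s-ξ ≤ ε := by linarith
        have h4 : T+ε*t-ξ ≤ ε := by linarith
        rw [Real.norm_eq_abs,
          abs_of_nonneg (mul_nonneg (pow_nonneg h1 _) (pow_nonneg h2 _))]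
        calc (T+ε*s-ξ)^(n+1) * (T+ε*t-ξ)^(n+1) ≤ ε^(n+1) * ε^(n+1) :=
              mul_le_mul (pow_le_pow_left₀ h1 h3 _) (pow_le_pow_left₀ h2 h4 _)
                (pow_nonneg h2 _) (pow_nonneg hε0.le _)
          _ = ε^(2*n+2) := by rw [← pow_add]; congr 1; omega
      refine (norm_setIntegral_le_of_norm_le_const measure_Ioc_lt_top hb).trans ?_
      have hvol : (volume (Ioc T (T + ε*r))).toReal = ε * r := by
        rw [Real.volume_Ioc, ENNReal.toReal_ofReal (by linarith)]
        ring
      rw [measureReal_def, hvol]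
      have h5 : ε^(2*n+2) ≤ ε^2 := pow_le_pow_of_le_one hε0.le hε1 (by omega)
      calc ε^(2*n+2) * (ε * r) ≤ ε^2 * (ε * 1) := by gcongr
        _ = ε^3 := by ring
    -- bound on the main difference integral
    have iG : IntegrableOn (fun ξ : ℝ =>
        ((T+ε*s-ξ)^(n+1) - (T-ξ)^(n+1)) * ((T+ε*t-ξ)^(n+1) - (T-ξ)^(n+1))) (Ioc 0 T) volume := by
      apply Continuous.integrableOn_Ioc; fun_prop
    have iP : IntegrableOn (fun ξ : ℝ =>
        ((n:ℝ)+1)^2 * ε^2 * t * s * ((T-ξ)^(2*n))) (Ioc 0 T) volume := by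
      apply Continuous.integrableOn_Ioc; fun_prop
    have h_diff : ‖(∫ ξ in Ioc (0:ℝ) T,
          ((T+ε*s-ξ)^(n+1) - (T-ξ)^(n+1)) * ((T+ε*t-ξ)^(n+1) - (T-ξ)^(n+1)))
        - ∫ ξ in Ioc (0:ℝ) T, ((n:ℝ)+1)^2 * ε^2 * t * s * ((T-ξ)^(2*n))‖ ≤ C1 * ε^3 * T := by
      rw [← integral_sub iG iP]
      refine (norm_setIntegral_le_of_norm_le_const measure_Ioc_lt_top hpt).trans ?_
      rw [measureReal_def, Real.volume_Ioc, ENNReal.toReal_ofReal (by linarith)]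
      exact le_of_eq (by rw [sub_zero])
    -- rewrite the covariance combination
    have hF : k (T+ε*t) (T+ε*s) - k (T+ε*t) T - k (T+ε*s) T + k T T
        = c0 * ((∫ ξ in Ioc (0:ℝ) T,
            ((T+ε*s-ξ)^(n+1) - (T-ξ)^(n+1)) * ((T+ε*t-ξ)^(n+1) - (T-ξ)^(n+1)))
          + ∫ ξ in Ioc T (T + ε*r), (T+ε*s-ξ)^(n+1) * (T+ε*t-ξ)^(n+1)) := by
      rw [hk (T+ε*t) (T+ε*s), hk (T+ε*t) T, hk (T+ε*s) T, hk T T,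
        hminba, min_eq_left hTa, min_eq_left hTb, min_self, h_split, h_comb]
      ring
    have h2n1 : (0:ℝ) < 2*(n:ℝ)+1 := by positivity
    have hG : c0 * (((n:ℝ)+1)^2 / (2*((n:ℝ)+1) - 1)) * T^(2*n+1) * s * t
        = c0 * (∫ ξ in Ioc (0:ℝ) T, ((n:ℝ)+1)^2 * ε^2 * t * s * ((T-ξ)^(2*n))) / ε^2 := by
      rw [h_model, show (2*((n:ℝ)+1) - 1) = 2*(n:ℝ)+1 from by ring]
      field_simp
    rw [show ((n+1:ℕ):ℝ) = (n:ℝ)+1 from by push_cast; ring,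
      show 2*(n+1)-1 = 2*n+1 from by omega, hF, hG]
    have hXeq : c0 * (∫ ξ in Ioc (0:ℝ) T, ((n:ℝ)+1)^2 * ε^2 * t * s * ((T-ξ)^(2*n))) / ε^2
        - c0 * ((∫ ξ in Ioc (0:ℝ) T,
            ((T+ε*s-ξ)^(n+1) - (T-ξ)^(n+1)) * ((T+ε*t-ξ)^(n+1) - (T-ξ)^(n+1)))
          + ∫ ξ in Ioc T (T + ε*r), (T+ε*s-ξ)^(n+1) * (T+ε*t-ξ)^(n+1)) / ε^2
        = -(c0 * (((∫ ξ in Ioc (0:ℝ) T,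
            ((T+ε*s-ξ)^(n+1) - (T-ξ)^(n+1)) * ((T+ε*t-ξ)^(n+1) - (T-ξ)^(n+1)))
          - ∫ ξ in Ioc (0:ℝ) T, ((n:ℝ)+1)^2 * ε^2 * t * s * ((T-ξ)^(2*n)))
          + ∫ ξ in Ioc T (T + ε*r), (T+ε*s-ξ)^(n+1) * (T+ε*t-ξ)^(n+1)) / ε^2) := by
      ring
    rw [hXeq, abs_neg, abs_div, abs_of_pos (pow_pos hε0 2), abs_mul, abs_of_pos hc0pos]
    rw [Real.norm_eq_abs] at h_diff h_I2
    have h6 : |((∫ ξ in Ioc (0:ℝ) T,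
            ((T+ε*s-ξ)^(n+1) - (T-ξ)^(n+1)) * ((T+ε*t-ξ)^(n+1) - (T-ξ)^(n+1)))
          - ∫ ξ in Ioc (0:ℝ) T, ((n:ℝ)+1)^2 * ε^2 * t * s * ((T-ξ)^(2*n)))
          + ∫ ξ in Ioc T (T + ε*r), (T+ε*s-ξ)^(n+1) * (T+ε*t-ξ)^(n+1)|
        ≤ C1 * ε^3 * T + ε^3 := (abs_add_le _ _).trans (add_le_add h_diff h_I2)
    have h7 : c0 * (C1 * ε^3 * T + ε^3) / ε^2 = C2 * ε := by
      rw [hC2def]; field_simp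
    have h8 : C2 * ε < δ := by
      have h9 := (lt_div_iff₀ (by positivity : (0:ℝ) < C2 + 1)).mp hεδ'
      have h10 : ε * (C2 + 1) = C2 * ε + ε := by ring
      linarith
    calc c0 * |((∫ ξ in Ioc (0:ℝ) T,
            ((T+ε*s-ξ)^(n+1) - (T-ξ)^(n+1)) * ((T+ε*t-ξ)^(n+1) - (T-ξ)^(n+1)))
          - ∫ ξ in Ioc (0:ℝ) T, ((n:ℝ)+1)^2 * ε^2 * t * s * ((T-ξ)^(2*n)))
          + ∫ ξ in Ioc T (T + ε*r), (T+ε*s-ξ)^(n+1) * (T+ε*t-ξ)^(n+1)| / ε^2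
        ≤ c0 * (C1 * ε^3 * T + ε^3) / ε^2 := by gcongr
      _ = C2 * ε := h7
      _ < δ := h8
  intro p hp
  rw [Real.dist_eq]
  exact main p.1 p.2 hp.1.1 hp.1.2 hp.2.1 hp.2.2
end

section
/- Let K(t,s) be the Molchan–Golosov kernel of fractional Brownian motion with H > 1/2, K(t,s) = c_H [ ((t/s)(t−s))^{H−1/2} − (H−1/2) s^{1/2−H} ∫_s^t u^{H−3/2}(u−s)^{H−1/2} du ]. Then for every T > 0, lim_{ε→0} ε^{1/2−H} K(T+εt, T+εs) = c_H (t−s)^{H−1/2} uniformly for 0 ≤ s < t ≤ 1. -/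
open MeasureTheory Set Filter Real

set_option maxHeartbeats 1000000

/-- **Small-time behavior of the fBm kernel near the diagonal.** Let `K` be the
Molchan–Golosov kernel of fractional Brownian motion with Hurst index `H > 1/2`. Then for every
`T > 0`, `ε^{1/2-H} K(T+εt, T+εs) → c_H (t-s)^{H-1/2}` as `ε → 0⁺`, uniformly for
`0 ≤ s < t ≤ 1`. -/
theorem fbm_kernel_diagonal_scaling
    (H : ℝ) (hH : H ∈ Set.Ioo (1/2 : ℝ) 1)
    (cH : ℝ)
    (hcH : cH = Real.sqrt (2 * H * Real.Gamma (3/2 - H) /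
      (Real.Gamma (H + 1/2) * Real.Gamma (2 - 2 * H))))
    (K : ℝ → ℝ → ℝ)
    (hK : ∀ t s : ℝ, 0 < s → s ≤ t →
      K t s = cH * ((t / s * (t - s)) ^ (H - 1/2) -
        (H - 1/2) * s ^ (1/2 - H) *
          ∫ u in Ioc s t, u ^ (H - 3/2) * (u - s) ^ (H - 1/2)))
    (T : ℝ) (hT : 0 < T) :
    TendstoUniformlyOn
      (fun ε (p : ℝ × ℝ) => ε ^ (1/2 - H) * K (T + ε * p.1) (T + ε * p.2))
      (fun p => cH * (p.1 - p.2) ^ (H - 1/2))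
      (nhdsWithin 0 (Ioi 0))
      {p : ℝ × ℝ | 0 ≤ p.2 ∧ p.2 < p.1 ∧ p.1 ≤ 1} := by
  obtain ⟨hH1, hH2⟩ := hH
  have hcH0 : 0 ≤ cH := hcH ▸ Real.sqrt_nonneg _
  have hHpos : 0 < H - 1/2 := by linarith
  rw [Metric.tendstoUniformlyOn_iff]
  intro δ hδ
  set B : ℝ → ℝ := fun ε => cH * ((1 + ε / T) ^ (H - 1/2) - 1) + cH * (H - 1/2) * ε / T
    with hBdef
  have hBcont : Tendsto B (nhds 0) (nhds 0) := by
    have h1 : ContinuousAt (fun ε : ℝ => (1 + ε / T) ^ (H - 1/2)) 0 := by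
      have hb : ContinuousAt (fun ε : ℝ => 1 + ε / T) 0 :=
        (continuous_const.add (continuous_id.div_const T)).continuousAt
      exact hb.rpow_const (Or.inl (by norm_num))
    have hc : ContinuousAt B 0 := by
      apply ContinuousAt.add
      · exact continuousAt_const.mul (h1.sub continuousAt_const)
      · exact (continuousAt_const.mul continuousAt_id).div_const T
    have hB0 : B 0 = 0 := by simp [hBdef]
    simpa [hB0] using hc.tendsto
  have hBδ : ∀ᶠ ε in nhdsWithin 0 (Ioi 0), B ε < δ :=
    (hBcont.mono_left nhdsWithin_le_nhds).eventually_lt_const hδ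
  filter_upwards [hBδ, self_mem_nhdsWithin] with ε hBε (hε : 0 < ε)
  rintro ⟨t, s⟩ ⟨hs0, hst, ht1⟩
  simp only at hs0 hst ht1 ⊢
  set a := T + ε * s with ha_def
  set b := T + ε * t with hb_def
  have ha : 0 < a := by positivity
  have haT : T ≤ a := le_add_of_nonneg_right (by positivity)
  have hd : 0 < t - s := sub_pos.2 hst
  have hd1 : t - s ≤ 1 := by linarith
  have hba : b - a = ε * (t - s) := by rw [ha_def, hb_def]; ring
  have hab : a ≤ b := by nlinarith
  rw [hK b a ha hab, Real.dist_eq, abs_sub_comm]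
  -- abbreviations
  set e := H - 1/2 with he_def
  set I := ∫ u in Ioc a b, u ^ (H - 3/2) * (u - a) ^ e with hI_def
  -- split the first rpow
  have hb0 : 0 < b := ha.trans_le hab
  have hba0 : 0 ≤ b / a := div_nonneg hb0.le ha.le
  have hfirst : (b / a * (b - a)) ^ e = (b / a) ^ e * ε ^ e * (t - s) ^ e := by
    rw [hba, show b / a * (ε * (t - s)) = b / a * ε * (t - s) by ring,
      Real.mul_rpow (mul_nonneg hba0 hε.le) hd.le, Real.mul_rpow hba0 hε.le]
  have hεcancel : ε ^ (1/2 - H) * ε ^ e = 1 := by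
    rw [← Real.rpow_add hε, he_def]
    norm_num
  -- rewrite the LHS as a difference of two terms
  have hrw : ε ^ (1/2 - H) * (cH * ((b / a * (b - a)) ^ e - e * a ^ (1/2 - H) * I))
      - cH * (t - s) ^ e
      = cH * ((b / a) ^ e - 1) * (t - s) ^ e
        - cH * e * a ^ (1/2 - H) * (ε ^ (1/2 - H) * I) := by
    rw [hfirst]
    have : ε ^ (1/2 - H) * ((b / a) ^ e * ε ^ e * (t - s) ^ e)
        = (b / a) ^ e * (t - s) ^ e := by
      rw [show ε ^ (1/2 - H) * ((b / a) ^ e * ε ^ e * (t - s) ^ e)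
          = (ε ^ (1/2 - H) * ε ^ e) * ((b / a) ^ e * (t - s) ^ e) by ring, hεcancel]
      ring
    linear_combination cH * this
  rw [hrw]
  -- bounds
  have hba_le : b / a ≤ 1 + ε / T := by
    rw [div_le_iff₀ ha]
    have h1 : ε / T * T = ε := div_mul_cancel₀ ε hT.ne'
    have h2 : ε ≤ ε / T * a := by
      calc ε = ε / T * T := h1.symm
        _ ≤ ε / T * a := by
            have : (0:ℝ) ≤ ε / T := by positivity
            exact mul_le_mul_of_nonneg_left haT this
    have h3 : (1 + ε / T) * a = a + ε / T * a := by ring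
    have h4 : ε * (t - s) ≤ ε * 1 := mul_le_mul_of_nonneg_left hd1 hε.le
    linarith [hba]
  have hba_ge : 1 ≤ b / a := (one_le_div ha).2 hab
  have hP1 : 1 ≤ (b / a) ^ e := Real.one_le_rpow hba_ge hHpos.le
  have hP2 : (b / a) ^ e ≤ (1 + ε / T) ^ e :=
    Real.rpow_le_rpow (by positivity) hba_le hHpos.le
  have hD1 : (t - s) ^ e ≤ 1 := Real.rpow_le_one hd.le hd1 hHpos.le
  have hD0 : 0 ≤ (t - s) ^ e := Real.rpow_nonneg hd.le e
  -- bound the integral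
  have hIbound : |I| ≤ a ^ (H - 3/2) * (ε * (t - s)) ^ e * (ε * (t - s)) := by
    have hvol : volume (Ioc a b) < ⊤ := by
      rw [Real.volume_Ioc]; exact ENNReal.ofReal_lt_top
    have hC : ∀ᵐ u : ℝ ∂volume, u ∈ Ioc a b →
        ‖u ^ (H - 3/2) * (u - a) ^ e‖ ≤ a ^ (H - 3/2) * (ε * (t - s)) ^ e := by
      refine Eventually.of_forall fun u hu => ?_
      have hu1 : a < u := hu.1
      have hu2 : u ≤ b := hu.2
      have hu0 : (0:ℝ) < u := ha.trans hu1
      rw [Real.norm_eq_abs, abs_of_nonneg (mul_nonneg (Real.rpow_nonneg hu0.le _)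
        (Real.rpow_nonneg (by linarith) _))]
      apply mul_le_mul
      · exact Real.rpow_le_rpow_of_nonpos ha hu1.le (by linarith)
      · rw [← hba]
        exact Real.rpow_le_rpow (by linarith) (by linarith) hHpos.le
      · exact Real.rpow_nonneg (by linarith) _
      · exact Real.rpow_nonneg ha.le _
    have := norm_setIntegral_le_of_norm_le_const_ae' (μ := volume) hvol
      hC
    rw [Real.norm_eq_abs] at this
    calc |I| ≤ a ^ (H - 3/2) * (ε * (t - s)) ^ e * (volume (Ioc a b)).toReal := this
      _ = a ^ (H - 3/2) * (ε * (t - s)) ^ e * (ε * (t - s)) := by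
        rw [Real.volume_Ioc, ENNReal.toReal_ofReal (by linarith), hba]
  -- bound ε^{1/2-H} * |I|
  have hεI : ε ^ (1/2 - H) * |I| ≤ a ^ (H - 3/2) * ε := by
    have h1 : ε ^ (1/2 - H) * |I|
        ≤ ε ^ (1/2 - H) * (a ^ (H - 3/2) * (ε * (t - s)) ^ e * (ε * (t - s))) :=
      mul_le_mul_of_nonneg_left hIbound (Real.rpow_nonneg hε.le _)
    have h2 : (ε * (t - s)) ^ e = ε ^ e * (t - s) ^ e :=
      Real.mul_rpow hε.le hd.le
    calc ε ^ (1/2 - H) * |I|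
        ≤ ε ^ (1/2 - H) * (a ^ (H - 3/2) * (ε * (t - s)) ^ e * (ε * (t - s))) := h1
      _ = a ^ (H - 3/2) * ((ε ^ (1/2 - H) * ε ^ e) * ((t - s) ^ e * (t - s))) * ε := by
          rw [h2]; ring
      _ = a ^ (H - 3/2) * ((t - s) ^ e * (t - s)) * ε := by rw [hεcancel]; ring
      _ ≤ a ^ (H - 3/2) * 1 * ε := by
          have h3 : (t - s) ^ e * (t - s) ≤ 1 := by nlinarith
          have ha3 : 0 ≤ a ^ (H - 3/2) := Real.rpow_nonneg ha.le _
          exact mul_le_mul_of_nonneg_right (mul_le_mul_of_nonneg_left h3 ha3) hε.le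
      _ = a ^ (H - 3/2) * ε := by ring
  have haa : a ^ (1/2 - H) * a ^ (H - 3/2) = a⁻¹ := by
    rw [← Real.rpow_add ha, show (1/2 - H) + (H - 3/2) = -1 by ring, Real.rpow_neg_one]
  have haT' : a⁻¹ ≤ T⁻¹ := inv_anti₀ hT haT
  have ha12 : 0 ≤ a ^ (1/2 - H) := Real.rpow_nonneg ha.le _
  -- final estimate
  calc |cH * ((b / a) ^ e - 1) * (t - s) ^ e
        - cH * e * a ^ (1/2 - H) * (ε ^ (1/2 - H) * I)|
      ≤ |cH * ((b / a) ^ e - 1) * (t - s) ^ e|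
        + |cH * e * a ^ (1/2 - H) * (ε ^ (1/2 - H) * I)| := abs_sub _ _
    _ ≤ cH * ((1 + ε / T) ^ e - 1) + cH * e * ε / T := by
        apply add_le_add
        · have hnn : 0 ≤ cH * ((b / a) ^ e - 1) * (t - s) ^ e := by
            have := sub_nonneg.2 hP1
            positivity
          rw [abs_of_nonneg hnn]
          have h5 : ((b / a) ^ e - 1) * (t - s) ^ e ≤ ((1 + ε / T) ^ e - 1) * 1 :=
            mul_le_mul (by linarith) hD1 hD0 (by linarith)
          calc cH * ((b / a) ^ e - 1) * (t - s) ^ e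
              = cH * (((b / a) ^ e - 1) * (t - s) ^ e) := by ring
            _ ≤ cH * (((1 + ε / T) ^ e - 1) * 1) := mul_le_mul_of_nonneg_left h5 hcH0
            _ = cH * ((1 + ε / T) ^ e - 1) := by ring
        · have hA : 0 ≤ cH * e * a ^ (1/2 - H) := by positivity
          have hX : 0 ≤ ε ^ (1/2 - H) := Real.rpow_nonneg hε.le _
          rw [abs_mul, abs_of_nonneg hA, abs_mul, abs_of_nonneg hX]
          calc cH * e * a ^ (1/2 - H) * (ε ^ (1/2 - H) * |I|)
              ≤ cH * e * a ^ (1/2 - H) * (a ^ (H - 3/2) * ε) :=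
                mul_le_mul_of_nonneg_left hεI hA
            _ = cH * e * (a⁻¹ * ε) := by
                rw [show cH * e * a ^ (1/2 - H) * (a ^ (H - 3/2) * ε)
                    = cH * e * ((a ^ (1/2 - H) * a ^ (H - 3/2)) * ε) by ring, haa]
            _ ≤ cH * e * (T⁻¹ * ε) := by
                have h0 : 0 ≤ cH * e := by positivity
                exact mul_le_mul_of_nonneg_left
                  (mul_le_mul_of_nonneg_right haT' hε.le) h0
            _ = cH * e * ε / T := by field_simp
    _ = B ε := by rw [hBdef]
    _ < δ := hBε
end

section
/- For the fractional Brownian motion kernel K with H > 1/2 and fixed T > 0, lim_{ε→0} (1/ε) ∫_0^T (K(T+εt, u) − K(T,u)) du = t (H−1/2) c_H [ ∫_0^T u^{1/2−H} (T^{H−3/2}(T−u)^{H−1/2} + T^{H−1/2}(T−u)^{H−3/2}) du − ∫_0^T u^{1/2−H} (T−u)^{H−1/2} T^{H−3/2} du ], uniformly in t ∈ [0,1]; consequently lim_{ε→0} ε^{-H} ∫_0^T (K(T+εt,u) − K(T,u)) du = 0 when H > 1/2. -/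
open MeasureTheory Set Filter Real
set_option maxHeartbeats 1000000

section aux

lemma betaInt' {T a b : ℝ} (hT : 0 < T) (ha : -1 < a) (hb : -1 < b) :
    IntegrableOn (fun u : ℝ => u ^ a * (T - u) ^ b) (Ioo 0 T) := by
  have h2 : (0:ℝ) < T/2 := by linarith
  have hmeas : AEStronglyMeasurable (fun u : ℝ => u ^ a * (T - u) ^ b) volume := by
    apply Measurable.aestronglyMeasurable; fun_prop
  have key : ∀ x y : ℝ, 0 < x → x ≤ y → ∀ c : ℝ, y ^ c ≤ x ^ c + y ^ c ∧ x ^ c ≤ x ^ c + y ^ c := by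
    intro x y hx hxy c
    constructor <;>
      nlinarith [Real.rpow_nonneg hx.le c, Real.rpow_nonneg (hx.le.trans hxy) c]
  have bnd : ∀ x y c : ℝ, 0 < x → x ≤ y → ∀ z ∈ Icc x y, z ^ c ≤ x ^ c + y ^ c := by
    intro x y c hx hxy z hz
    rcases le_or_gt 0 c with h | h
    · exact (Real.rpow_le_rpow (hx.le.trans hz.1) hz.2 h).trans (key x y hx hxy c).1
    · exact (Real.rpow_le_rpow_of_nonpos hx hz.1 h.le).trans (key x y hx hxy c).2
  have piece1 : IntegrableOn (fun u : ℝ => u ^ a * (T - u) ^ b) (Ioc 0 (T/2)) := by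
    have hint : IntegrableOn (fun u : ℝ => ((T/2) ^ b + T ^ b) * u ^ a) (Ioc 0 (T/2)) :=
      ((intervalIntegral.intervalIntegrable_rpow' ha (a := 0) (b := T/2)).1).const_mul _
    refine hint.mono' hmeas.restrict ?_
    filter_upwards [ae_restrict_mem measurableSet_Ioc] with u hu
    have hu0 : 0 < u := hu.1
    have h1 : (T - u) ^ b ≤ (T/2) ^ b + T ^ b :=
      bnd (T/2) T b h2 (by linarith) _ ⟨by linarith [hu.2], by linarith⟩
    rw [Real.norm_eq_abs, abs_of_nonneg (mul_nonneg (Real.rpow_nonneg hu0.le a)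
      (Real.rpow_nonneg (by linarith [hu.2]) b))]
    calc u ^ a * (T - u) ^ b ≤ u ^ a * ((T/2) ^ b + T ^ b) :=
          mul_le_mul_of_nonneg_left h1 (Real.rpow_nonneg hu0.le a)
      _ = ((T/2) ^ b + T ^ b) * u ^ a := by ring
  have piece2 : IntegrableOn (fun u : ℝ => u ^ a * (T - u) ^ b) (Ioc (T/2) T) := by
    have hint0 : IntervalIntegrable (fun x : ℝ => x ^ b) volume 0 (T/2) :=
      intervalIntegral.intervalIntegrable_rpow' hb
    have hint1 : IntervalIntegrable (fun x : ℝ => (T - x) ^ b) volume (T - 0) (T - T/2) :=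
      hint0.comp_sub_left T
    have hint : IntegrableOn (fun u : ℝ => ((T/2) ^ a + T ^ a) * (T - u) ^ b) (Ioc (T/2) T) := by
      have h := hint1.2
      simp only [sub_zero] at h
      have h' : IntegrableOn (fun x : ℝ => (T - x) ^ b) (Ioc (T - T/2) T) := h
      rw [show T - T/2 = T/2 by ring] at h'
      exact h'.const_mul _
    refine hint.mono' hmeas.restrict ?_
    filter_upwards [ae_restrict_mem measurableSet_Ioc] with u hu
    have h1 : u ^ a ≤ (T/2) ^ a + T ^ a := bnd (T/2) T a h2 (by linarith) _ ⟨hu.1.le, hu.2⟩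
    rw [Real.norm_eq_abs, abs_of_nonneg (mul_nonneg (Real.rpow_nonneg (by linarith [hu.1]) a)
      (Real.rpow_nonneg (by linarith [hu.2]) b))]
    exact mul_le_mul_of_nonneg_right h1 (Real.rpow_nonneg (by linarith [hu.2]) b)
  exact (piece1.union piece2).mono_set (fun x hx => by
    rcases le_or_gt x (T/2) with h | h
    · exact Or.inl ⟨hx.1, h⟩
    · exact Or.inr ⟨h, hx.2.le⟩)

lemma contOn_pow_mul' {u e e' : ℝ} {s : Set ℝ} (hs : ∀ v ∈ s, 0 < v)
    (h : ∀ v ∈ s, v - u ≠ 0 ∨ 0 ≤ e') :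
    ContinuousOn (fun v : ℝ => v ^ e * (v - u) ^ e') s := by
  apply ContinuousOn.mul
  · exact continuousOn_id.rpow_const fun v hv => Or.inl (hs v hv).ne'
  · exact ((continuousOn_id.sub continuousOn_const)).rpow_const h

lemma kdiff' {H cH : ℝ} (hH : H ∈ Ioo (1/2:ℝ) 1)
    {K : ℝ → ℝ → ℝ}
    (hK : ∀ t s : ℝ, 0 < s → s ≤ t →
      K t s = cH * ((t / s * (t - s)) ^ (H - 1/2) -
        (H - 1/2) * s ^ (1/2 - H) *
          ∫ u in Ioc s t, u ^ (H - 3/2) * (u - s) ^ (H - 1/2)))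
    {T : ℝ} {u : ℝ} (hu : u ∈ Ioo 0 T) {s : ℝ} (hs : T ≤ s) :
    K s u - K T u = cH * (H - 1/2) *
      (u ^ (1/2 - H) * ∫ v in Ioc T s, v ^ (H - 1/2) * (v - u) ^ (H - 3/2)) := by
  obtain ⟨hu0, huT⟩ := hu
  set p := H - 1/2 with hp
  set q := H - 3/2 with hq
  have hp0 : 0 < p := by simp [hp]; linarith [hH.1]
  have hq1 : q = p - 1 := by simp [hp, hq]; ring
  have hT0 : 0 < T := hu0.trans huT
  have hs0 : 0 < s := hT0.trans_le hs
  have hgint : ∀ a b : ℝ, 0 < a → a ≤ b →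
      IntervalIntegrable (fun v : ℝ => v ^ q * (v - u) ^ p) volume a b := by
    intro a b ha hab
    apply ContinuousOn.intervalIntegrable
    rw [uIcc_of_le hab]
    exact contOn_pow_mul' (fun v hv => ha.trans_le hv.1) (fun v hv => Or.inr hp0.le)
  have split : (∫ v in Ioc u s, v ^ q * (v - u) ^ p) =
      (∫ v in Ioc u T, v ^ q * (v - u) ^ p) + ∫ v in Ioc T s, v ^ q * (v - u) ^ p := by
    rw [← intervalIntegral.integral_of_le (huT.le.trans hs), ← intervalIntegral.integral_of_le huT.le,
      ← intervalIntegral.integral_of_le hs]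
    exact (intervalIntegral.integral_add_adjacent_intervals (hgint u T hu0 huT.le)
      (hgint T s hT0 hs)).symm
  have hderiv : ∀ v ∈ Icc T s, HasDerivAt (fun v : ℝ => v ^ p * (v - u) ^ p)
      (p * (v ^ q * (v - u) ^ p + v ^ p * (v - u) ^ q)) v := by
    intro v hv
    have hv0 : v ≠ 0 := (hT0.trans_le hv.1).ne'
    have hvu : v - u ≠ 0 := by have := hv.1; intro h; nlinarith [huT]
    have d1 : HasDerivAt (fun x : ℝ => x ^ p) (p * v ^ (p - 1)) v :=
      Real.hasDerivAt_rpow_const (Or.inl hv0)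
    have d2 : HasDerivAt (fun x : ℝ => (x - u) ^ p) (p * (v - u) ^ (p - 1)) v := by
      have := (Real.hasDerivAt_rpow_const (p := p) (Or.inl hvu)).comp v
        ((hasDerivAt_id v).sub_const u)
      simpa [Function.comp_def] using this
    have := d1.mul d2
    refine this.congr_deriv ?_
    rw [hq1]; ring
  have hderint : IntervalIntegrable
      (fun v => p * (v ^ q * (v - u) ^ p + v ^ p * (v - u) ^ q)) volume T s := by
    apply ContinuousOn.intervalIntegrable
    rw [uIcc_of_le hs]
    refine continuousOn_const.mul (ContinuousOn.add ?_ ?_)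
    · exact contOn_pow_mul' (fun v hv => hT0.trans_le hv.1) (fun v hv => Or.inr hp0.le)
    · exact contOn_pow_mul' (fun v hv => hT0.trans_le hv.1)
        (fun v hv => Or.inl (by have := hv.1; intro h; nlinarith [huT]))
  have ftc : (∫ v in T..s, p * (v ^ q * (v - u) ^ p + v ^ p * (v - u) ^ q)) =
      s ^ p * (s - u) ^ p - T ^ p * (T - u) ^ p := by
    rw [intervalIntegral.integral_eq_sub_of_hasDerivAt (by rw [uIcc_of_le hs]; exact hderiv) hderint]
  have hhint : IntervalIntegrable (fun v : ℝ => v ^ p * (v - u) ^ q) volume T s := by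
    apply ContinuousOn.intervalIntegrable
    rw [uIcc_of_le hs]
    exact contOn_pow_mul' (fun v hv => hT0.trans_le hv.1)
      (fun v hv => Or.inl (by have := hv.1; intro h; nlinarith [huT]))
  have sum_eq : s ^ p * (s - u) ^ p - T ^ p * (T - u) ^ p =
      p * ((∫ v in Ioc T s, v ^ q * (v - u) ^ p) + ∫ v in Ioc T s, v ^ p * (v - u) ^ q) := by
    rw [← ftc, ← intervalIntegral.integral_of_le hs, ← intervalIntegral.integral_of_le hs,
      ← intervalIntegral.integral_add (hgint T s hT0 hs) hhint,
      ← intervalIntegral.integral_const_mul]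
  have hpow : ∀ r : ℝ, T ≤ r → (r / u * (r - u)) ^ p = u ^ (-p) * (r ^ p * (r - u) ^ p) := by
    intro r hr
    have hru : (0:ℝ) ≤ r - u := by linarith
    have hr0 : (0:ℝ) ≤ r := by linarith
    rw [Real.mul_rpow (div_nonneg hr0 hu0.le) hru, Real.div_rpow hr0 hu0.le,
      Real.rpow_neg hu0.le]
    ring
  have h12 : (1/2 - H : ℝ) = -p := by rw [hp]; ring
  rw [hK s u hu0 (huT.le.trans hs), hK T u hu0 huT.le, h12]
  rw [split, hpow s (le_trans le_rfl hs), hpow T le_rfl]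
  linear_combination cH * u ^ (-p) * sum_eq

end aux

theorem fbm_main_aux
    (H : ℝ) (hH : H ∈ Set.Ioo (1/2 : ℝ) 1)
    (cH : ℝ) (hcH0 : 0 ≤ cH)
    (K : ℝ → ℝ → ℝ)
    (hK : ∀ t s : ℝ, 0 < s → s ≤ t →
      K t s = cH * ((t / s * (t - s)) ^ (H - 1/2) -
        (H - 1/2) * s ^ (1/2 - H) *
          ∫ u in Ioc s t, u ^ (H - 3/2) * (u - s) ^ (H - 1/2)))
    (T : ℝ) (hT : 0 < T) :
    TendstoUniformlyOn
      (fun ε (t : ℝ) => (1 / ε) * ∫ u in Ioc (0:ℝ) T, (K (T + ε * t) u - K T u))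
      (fun t => t * (cH * (H - 1/2) * (T ^ (H - 1/2) *
        ∫ u in Ioo (0:ℝ) T, u ^ (1/2 - H) * (T - u) ^ (H - 3/2))))
      (nhdsWithin 0 (Ioi 0)) (Icc (0:ℝ) 1) := by
  have hp0 : (0:ℝ) < H - 1/2 := by linarith [hH.1]
  have hq1 : (-1:ℝ) < H - 3/2 := by linarith [hH.1]
  have hq0 : H - 3/2 < 0 := by linarith [hH.2]
  have hσ1 : (-1:ℝ) < 1/2 - H := by linarith [hH.2]
  have hσ0 : 1/2 - H < 0 := by linarith [hH.1]
  set C0 := ∫ u in Ioo (0:ℝ) T, u ^ (1/2 - H) * (T - u) ^ (H - 3/2) with hC0def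
  have int1 : IntegrableOn (fun u : ℝ => u ^ (1/2 - H) * (T - u) ^ (H - 3/2)) (Ioo 0 T) :=
    betaInt' hT hσ1 hq1
  have hC0nn : 0 ≤ C0 := by
    rw [hC0def]
    apply setIntegral_nonneg measurableSet_Ioo
    intro u hu
    exact mul_nonneg (Real.rpow_nonneg hu.1.le _) (Real.rpow_nonneg (by linarith [hu.2]) _)
  have measIn : ∀ s : ℝ, AEStronglyMeasurable
      (fun u : ℝ => ∫ v in Ioc T s, v ^ (H - 1/2) * (v - u) ^ (H - 3/2)) volume := by
    intro s
    have h : StronglyMeasurable (Function.uncurry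
        fun (u v : ℝ) => v ^ (H - 1/2) * (v - u) ^ (H - 3/2)) := by
      apply Measurable.stronglyMeasurable
      unfold Function.uncurry
      fun_prop
    exact (h.integral_prod_right).aestronglyMeasurable
  -- integrability of inner integrand
  have In_intOn : ∀ s : ℝ, T ≤ s → ∀ u ∈ Ioo (0:ℝ) T,
      IntegrableOn (fun v : ℝ => v ^ (H - 1/2) * (v - u) ^ (H - 3/2)) (Ioc T s) := by
    intro s hs u hu
    apply (ContinuousOn.integrableOn_compact isCompact_Icc ?_).mono_set Ioc_subset_Icc_self
    apply contOn_pow_mul' (fun v hv => lt_of_lt_of_le hT hv.1)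
    intro v hv
    exact Or.inl (by have := hv.1; intro h; nlinarith [hu.2])
  have In_nonneg : ∀ s : ℝ, ∀ u ∈ Ioo (0:ℝ) T,
      0 ≤ ∫ v in Ioc T s, v ^ (H - 1/2) * (v - u) ^ (H - 3/2) := by
    intro s u hu
    apply setIntegral_nonneg measurableSet_Ioc
    intro v hv
    exact mul_nonneg (Real.rpow_nonneg (by linarith [hv.1]) _)
      (Real.rpow_nonneg (by nlinarith [hv.1, hu.2]) _)
  -- upper and lower bounds for the inner integral
  have In_ub : ∀ ε ∈ Ioc (0:ℝ) 1, ∀ t ∈ Icc (0:ℝ) 1, ∀ u ∈ Ioo (0:ℝ) T,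
      (∫ v in Ioc T (T + ε * t), v ^ (H - 1/2) * (v - u) ^ (H - 3/2)) ≤
        ε * t * ((T + ε) ^ (H - 1/2) * (T - u) ^ (H - 3/2)) := by
    intro ε hε t ht u hu
    have het : 0 ≤ ε * t := mul_nonneg hε.1.le ht.1
    calc (∫ v in Ioc T (T + ε * t), v ^ (H - 1/2) * (v - u) ^ (H - 3/2))
        ≤ ∫ _ in Ioc T (T + ε * t), (T + ε) ^ (H - 1/2) * (T - u) ^ (H - 3/2) := by
          apply setIntegral_mono_on (In_intOn _ (by linarith) u hu)
            (integrableOn_const (hs := measure_Ioc_lt_top.ne)) measurableSet_Ioc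
          intro v hv
          have h1 : v ^ (H - 1/2) ≤ (T + ε) ^ (H - 1/2) := by
            apply Real.rpow_le_rpow (by linarith [hv.1]) ?_ hp0.le
            nlinarith [hv.2, hε.2, ht.2, hε.1, ht.1]
          have h2 : (v - u) ^ (H - 3/2) ≤ (T - u) ^ (H - 3/2) :=
            Real.rpow_le_rpow_of_nonpos (by linarith [hu.2]) (by linarith [hv.1]) hq0.le
          exact mul_le_mul h1 h2 (Real.rpow_nonneg (by nlinarith [hv.1, hu.2]) _)
            (Real.rpow_nonneg (by linarith [hε.1]) _)
      _ = ε * t * ((T + ε) ^ (H - 1/2) * (T - u) ^ (H - 3/2)) := by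
          rw [setIntegral_const, measureReal_def, Real.volume_Ioc, smul_eq_mul,
            show T + ε * t - T = ε * t by ring, ENNReal.toReal_ofReal het]
  have In_lb : ∀ ε ∈ Ioc (0:ℝ) 1, ∀ t ∈ Icc (0:ℝ) 1, ∀ u ∈ Ioo (0:ℝ) T,
      ε * t * (T ^ (H - 1/2) * (T + ε - u) ^ (H - 3/2)) ≤
        ∫ v in Ioc T (T + ε * t), v ^ (H - 1/2) * (v - u) ^ (H - 3/2) := by
    intro ε hε t ht u hu
    have het : 0 ≤ ε * t := mul_nonneg hε.1.le ht.1
    calc ε * t * (T ^ (H - 1/2) * (T + ε - u) ^ (H - 3/2))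
        = ∫ _ in Ioc T (T + ε * t), T ^ (H - 1/2) * (T + ε - u) ^ (H - 3/2) := by
          rw [setIntegral_const, measureReal_def, Real.volume_Ioc, smul_eq_mul,
            show T + ε * t - T = ε * t by ring, ENNReal.toReal_ofReal het]
      _ ≤ _ := by
          apply setIntegral_mono_on (integrableOn_const (hs := measure_Ioc_lt_top.ne))
            (In_intOn _ (by linarith) u hu) measurableSet_Ioc
          intro v hv
          have h1 : T ^ (H - 1/2) ≤ v ^ (H - 1/2) :=
            Real.rpow_le_rpow hT.le (by linarith [hv.1]) hp0.le
          have h2 : (T + ε - u) ^ (H - 3/2) ≤ (v - u) ^ (H - 3/2) := by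
            apply Real.rpow_le_rpow_of_nonpos (by nlinarith [hu.2, hv.1]) ?_ hq0.le
            nlinarith [hv.2, ht.2, hε.1, ht.1]
          exact mul_le_mul h1 h2 (Real.rpow_nonneg (by nlinarith [hu.2, hε.1]) _)
            (Real.rpow_nonneg (by linarith [hv.1]) _)
  -- error function
  set err : ℝ → ℝ := fun ε => cH * (H - 1/2) *
    (((T + ε) ^ (H - 1/2) - T ^ (H - 1/2)) * C0 +
      T ^ (H - 1/2) * (C0 - ∫ u in Ioo (0:ℝ) T, u ^ (1/2 - H) * (T + ε - u) ^ (H - 3/2)))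
    with herrdef
  have int4 : ∀ ε : ℝ, 0 < ε →
      IntegrableOn (fun u : ℝ => u ^ (1/2 - H) * (T + ε - u) ^ (H - 3/2)) (Ioo 0 T) := by
    intro ε hε
    have hm : AEStronglyMeasurable (fun u : ℝ => u ^ (1/2 - H) * (T + ε - u) ^ (H - 3/2)) volume := by
      apply Measurable.aestronglyMeasurable; fun_prop
    refine int1.mono' hm.restrict ?_
    filter_upwards [ae_restrict_mem measurableSet_Ioo] with u hu
    rw [Real.norm_eq_abs, abs_of_nonneg (mul_nonneg (Real.rpow_nonneg hu.1.le _)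
      (Real.rpow_nonneg (by nlinarith [hu.2]) _))]
    apply mul_le_mul_of_nonneg_left ?_ (Real.rpow_nonneg hu.1.le _)
    exact Real.rpow_le_rpow_of_nonpos (by linarith [hu.2]) (by linarith) hq0.le
  -- key estimate
  have key : ∀ ε ∈ Ioc (0:ℝ) 1, ∀ t ∈ Icc (0:ℝ) 1,
      |(1 / ε) * (∫ u in Ioc (0:ℝ) T, (K (T + ε * t) u - K T u)) -
        t * (cH * (H - 1/2) * (T ^ (H - 1/2) * C0))| ≤ err ε := by
    intro ε hε t ht
    have hε0 : 0 < ε := hε.1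
    have hst : T ≤ T + ε * t := by nlinarith [ht.1]
    -- identity for the integral
    have Ieq : (∫ u in Ioc (0:ℝ) T, (K (T + ε * t) u - K T u)) =
        cH * (H - 1/2) * ∫ u in Ioo (0:ℝ) T, u ^ (1/2 - H) *
          ∫ v in Ioc T (T + ε * t), v ^ (H - 1/2) * (v - u) ^ (H - 3/2) := by
      rw [integral_Ioc_eq_integral_Ioo,
        setIntegral_congr_fun measurableSet_Ioo
          (fun u hu => kdiff' hH hK hu hst), integral_const_mul]
    -- integrability of the main integrand
    have int3 : IntegrableOn (fun u : ℝ => u ^ (1/2 - H) *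
        ∫ v in Ioc T (T + ε * t), v ^ (H - 1/2) * (v - u) ^ (H - 3/2)) (Ioo 0 T) := by
      have hm1 : AEStronglyMeasurable (fun u : ℝ => u ^ (1/2 - H)) volume := by
        apply Measurable.aestronglyMeasurable; fun_prop
      refine (int1.const_mul (ε * (T + ε) ^ (H - 1/2))).mono'
        (hm1.mul (measIn (T + ε * t))).restrict ?_
      filter_upwards [ae_restrict_mem measurableSet_Ioo] with u hu
      have h1 := In_ub ε hε t ht u hu
      have h2 := In_nonneg (T + ε * t) u hu
      rw [Real.norm_eq_abs, abs_of_nonneg (mul_nonneg (Real.rpow_nonneg hu.1.le _) h2)]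
      have h3 : u ^ (1/2 - H) * (∫ v in Ioc T (T + ε * t),
          v ^ (H - 1/2) * (v - u) ^ (H - 3/2)) ≤
          u ^ (1/2 - H) * (ε * t * ((T + ε) ^ (H - 1/2) * (T - u) ^ (H - 3/2))) :=
        mul_le_mul_of_nonneg_left h1 (Real.rpow_nonneg hu.1.le _)
      refine h3.trans ?_
      have h4 : ε * t ≤ ε := by nlinarith [ht.2, ht.1]
      have h5 : (0:ℝ) ≤ (T + ε) ^ (H - 1/2) * (T - u) ^ (H - 3/2) :=
        mul_nonneg (Real.rpow_nonneg (by linarith) _)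
          (Real.rpow_nonneg (by linarith [hu.2]) _)
      have h6 : (0:ℝ) ≤ u ^ (1/2 - H) := Real.rpow_nonneg hu.1.le _
      nlinarith [mul_le_mul_of_nonneg_right h4 h5]
    -- pointwise bound on the error integrand
    have ptbound : ∀ u ∈ Ioo (0:ℝ) T,
        |(1/ε) * (u ^ (1/2 - H) * ∫ v in Ioc T (T + ε * t),
            v ^ (H - 1/2) * (v - u) ^ (H - 3/2)) -
          (t * T ^ (H - 1/2)) * (u ^ (1/2 - H) * (T - u) ^ (H - 3/2))| ≤
        ((T + ε) ^ (H - 1/2) - T ^ (H - 1/2)) * (u ^ (1/2 - H) * (T - u) ^ (H - 3/2)) +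
          T ^ (H - 1/2) * (u ^ (1/2 - H) * (T - u) ^ (H - 3/2) -
            u ^ (1/2 - H) * (T + ε - u) ^ (H - 3/2)) := by
      intro u hu
      have hub := In_ub ε hε t ht u hu
      have hlb := In_lb ε hε t ht u hu
      have h6 : (0:ℝ) ≤ u ^ (1/2 - H) := Real.rpow_nonneg hu.1.le _
      have hTq : (0:ℝ) ≤ (T - u) ^ (H - 3/2) := Real.rpow_nonneg (by linarith [hu.2]) _
      have hTq' : (0:ℝ) ≤ (T + ε - u) ^ (H - 3/2) := Real.rpow_nonneg (by nlinarith [hu.2]) _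
      have hTp : (0:ℝ) ≤ T ^ (H - 1/2) := Real.rpow_nonneg hT.le _
      have hTple : T ^ (H - 1/2) ≤ (T + ε) ^ (H - 1/2) :=
        Real.rpow_le_rpow hT.le (by linarith) hp0.le
      have hqle : (T + ε - u) ^ (H - 3/2) ≤ (T - u) ^ (H - 3/2) :=
        Real.rpow_le_rpow_of_nonpos (by linarith [hu.2]) (by linarith) hq0.le
      have hInn := In_nonneg (T + ε * t) u hu
      rw [abs_le]
      constructor
      · -- lower bound
        have h := mul_le_mul_of_nonneg_left hlb (le_of_lt (by positivity : (0:ℝ) < 1/ε))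
        have hdiv : (1/ε) * (ε * t * (T ^ (H - 1/2) * (T + ε - u) ^ (H - 3/2))) =
            t * (T ^ (H - 1/2) * (T + ε - u) ^ (H - 3/2)) := by
          field_simp
        rw [hdiv] at h
        have hmul := mul_le_mul_of_nonneg_left h h6
        nlinarith [ht.1, ht.2, mul_nonneg h6 (mul_nonneg hTp (sub_nonneg.2 hqle)),
          mul_nonneg (sub_nonneg.2 hTple) (mul_nonneg h6 hTq),
          mul_nonneg (sub_nonneg.2 ht.2) (mul_nonneg (mul_nonneg hTp h6) (sub_nonneg.2 hqle))]
      · -- upper bound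
        have h := mul_le_mul_of_nonneg_left hub (le_of_lt (by positivity : (0:ℝ) < 1/ε))
        have hdiv : (1/ε) * (ε * t * ((T + ε) ^ (H - 1/2) * (T - u) ^ (H - 3/2))) =
            t * ((T + ε) ^ (H - 1/2) * (T - u) ^ (H - 3/2)) := by
          field_simp
        rw [hdiv] at h
        have hmul := mul_le_mul_of_nonneg_left h h6
        nlinarith [ht.1, ht.2, mul_nonneg h6 (mul_nonneg hTp (sub_nonneg.2 hqle)),
          mul_nonneg h6 hTq, sub_nonneg.2 hTple,
          mul_nonneg (sub_nonneg.2 ht.2) (mul_nonneg (mul_nonneg (sub_nonneg.2 hTple) h6) hTq)]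
    -- assemble
    rw [Ieq]
    have e1 : (1/ε) * (cH * (H - 1/2) * ∫ u in Ioo (0:ℝ) T, u ^ (1/2 - H) *
          ∫ v in Ioc T (T + ε * t), v ^ (H - 1/2) * (v - u) ^ (H - 3/2)) -
        t * (cH * (H - 1/2) * (T ^ (H - 1/2) * C0)) =
        cH * (H - 1/2) * ((∫ u in Ioo (0:ℝ) T, (1/ε) * (u ^ (1/2 - H) *
          ∫ v in Ioc T (T + ε * t), v ^ (H - 1/2) * (v - u) ^ (H - 3/2))) -
          ∫ u in Ioo (0:ℝ) T, (t * T ^ (H - 1/2)) * (u ^ (1/2 - H) * (T - u) ^ (H - 3/2))) := by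
      rw [integral_const_mul, integral_const_mul, hC0def]
      ring
    rw [e1]
    have intA : IntegrableOn (fun u : ℝ => (1/ε) * (u ^ (1/2 - H) *
        ∫ v in Ioc T (T + ε * t), v ^ (H - 1/2) * (v - u) ^ (H - 3/2))) (Ioo 0 T) :=
      int3.const_mul _
    have intB : IntegrableOn (fun u : ℝ => (t * T ^ (H - 1/2)) *
        (u ^ (1/2 - H) * (T - u) ^ (H - 3/2))) (Ioo 0 T) := int1.const_mul _
    rw [← integral_sub intA intB, abs_mul,
      abs_of_nonneg (mul_nonneg hcH0 hp0.le)]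
    have e2 : |∫ u in Ioo (0:ℝ) T, ((1/ε) * (u ^ (1/2 - H) *
          ∫ v in Ioc T (T + ε * t), v ^ (H - 1/2) * (v - u) ^ (H - 3/2)) -
          (t * T ^ (H - 1/2)) * (u ^ (1/2 - H) * (T - u) ^ (H - 3/2)))| ≤
        ∫ u in Ioo (0:ℝ) T,
          (((T + ε) ^ (H - 1/2) - T ^ (H - 1/2)) * (u ^ (1/2 - H) * (T - u) ^ (H - 3/2)) +
          T ^ (H - 1/2) * (u ^ (1/2 - H) * (T - u) ^ (H - 3/2) -
            u ^ (1/2 - H) * (T + ε - u) ^ (H - 3/2))) := by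
      rw [← Real.norm_eq_abs]
      refine (norm_integral_le_integral_norm _).trans ?_
      apply setIntegral_mono_on (intA.sub intB).norm
        (Integrable.add (int1.const_mul _) ((int1.sub (int4 ε hε0)).const_mul _))
        measurableSet_Ioo
      intro u hu
      rw [Real.norm_eq_abs]
      exact ptbound u hu
    refine (mul_le_mul_of_nonneg_left e2 (mul_nonneg hcH0 hp0.le)).trans_eq ?_
    have e3 : (∫ u in Ioo (0:ℝ) T,
        (((T + ε) ^ (H - 1/2) - T ^ (H - 1/2)) * (u ^ (1/2 - H) * (T - u) ^ (H - 3/2)) +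
          T ^ (H - 1/2) * (u ^ (1/2 - H) * (T - u) ^ (H - 3/2) -
            u ^ (1/2 - H) * (T + ε - u) ^ (H - 3/2)))) =
        ((T + ε) ^ (H - 1/2) - T ^ (H - 1/2)) * C0 +
          T ^ (H - 1/2) * (C0 - ∫ u in Ioo (0:ℝ) T, u ^ (1/2 - H) * (T + ε - u) ^ (H - 3/2)) := by
      have h1 : (fun u : ℝ =>
          ((T + ε) ^ (H - 1/2) - T ^ (H - 1/2)) * (u ^ (1/2 - H) * (T - u) ^ (H - 3/2)) +
          T ^ (H - 1/2) * (u ^ (1/2 - H) * (T - u) ^ (H - 3/2) -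
            u ^ (1/2 - H) * (T + ε - u) ^ (H - 3/2))) = fun u : ℝ =>
          (T + ε) ^ (H - 1/2) * (u ^ (1/2 - H) * (T - u) ^ (H - 3/2)) -
            T ^ (H - 1/2) * (u ^ (1/2 - H) * (T + ε - u) ^ (H - 3/2)) := by
        funext u; ring
      rw [h1, integral_sub (int1.const_mul _) ((int4 ε hε0).const_mul _),
        integral_const_mul, integral_const_mul, hC0def]
      ring
    rw [e3, herrdef]
  -- convergence of err to 0
  have tendA : Tendsto (fun ε : ℝ => (T + ε) ^ (H - 1/2)) (nhdsWithin 0 (Ioi 0))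
      (nhds (T ^ (H - 1/2))) := by
    have h2 : Tendsto (fun ε : ℝ => T + ε) (nhds 0) (nhds T) := by
      simpa using (continuous_const_add T).tendsto (0:ℝ)
    have h1 : ContinuousAt (fun x : ℝ => x ^ (H - 1/2)) T :=
      Real.continuousAt_rpow_const _ _ (Or.inl hT.ne')
    exact (h1.tendsto.comp h2).mono_left nhdsWithin_le_nhds
  have tendB : Tendsto (fun ε : ℝ => ∫ u in Ioo (0:ℝ) T, u ^ (1/2 - H) * (T + ε - u) ^ (H - 3/2))
      (nhdsWithin 0 (Ioi 0)) (nhds C0) := by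
    rw [hC0def]
    apply tendsto_integral_filter_of_dominated_convergence
      (fun u : ℝ => u ^ (1/2 - H) * (T - u) ^ (H - 3/2))
    · apply Eventually.of_forall
      intro ε
      apply Measurable.aestronglyMeasurable ?_ |>.restrict
      fun_prop
    · filter_upwards [self_mem_nhdsWithin] with ε (hε : ε ∈ Ioi (0:ℝ))
      filter_upwards [ae_restrict_mem measurableSet_Ioo] with u hu
      rw [Real.norm_eq_abs, abs_of_nonneg (mul_nonneg (Real.rpow_nonneg hu.1.le _)
        (Real.rpow_nonneg (by nlinarith [hu.2, mem_Ioi.1 hε]) _))]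
      apply mul_le_mul_of_nonneg_left ?_ (Real.rpow_nonneg hu.1.le _)
      exact Real.rpow_le_rpow_of_nonpos (by linarith [hu.2]) (by linarith [mem_Ioi.1 hε]) hq0.le
    · exact int1
    · filter_upwards [ae_restrict_mem measurableSet_Ioo] with u hu
      have h2 : Tendsto (fun ε : ℝ => T + ε - u) (nhds 0) (nhds (T - u)) := by
        simpa using (by fun_prop : Continuous fun ε : ℝ => T + ε - u).tendsto (0:ℝ)
      have h1 : ContinuousAt (fun x : ℝ => x ^ (H - 3/2)) (T - u) :=
        Real.continuousAt_rpow_const _ _ (Or.inl (by intro h; nlinarith [hu.2]))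
      have h3 : Tendsto (fun ε : ℝ => (T + ε - u) ^ (H - 3/2)) (nhds 0)
          (nhds ((T - u) ^ (H - 3/2))) := h1.tendsto.comp h2
      exact (h3.const_mul _).mono_left nhdsWithin_le_nhds
  have errTend : Tendsto err (nhdsWithin 0 (Ioi 0)) (nhds 0) := by
    have h0 : Tendsto (fun ε : ℝ => cH * (H - 1/2) *
        (((T + ε) ^ (H - 1/2) - T ^ (H - 1/2)) * C0 +
          T ^ (H - 1/2) * (C0 - ∫ u in Ioo (0:ℝ) T, u ^ (1/2 - H) * (T + ε - u) ^ (H - 3/2))))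
        (nhdsWithin 0 (Ioi 0)) (nhds (cH * (H - 1/2) *
          ((T ^ (H - 1/2) - T ^ (H - 1/2)) * C0 + T ^ (H - 1/2) * (C0 - C0)))) := by
      exact tendsto_const_nhds.mul (((tendA.sub tendsto_const_nhds).mul tendsto_const_nhds).add
        (tendsto_const_nhds.mul (tendsto_const_nhds.sub tendB)))
    rw [herrdef]
    simpa using h0
  -- conclude
  rw [Metric.tendstoUniformlyOn_iff]
  intro δ hδ
  have h1 : ∀ᶠ ε in nhdsWithin (0:ℝ) (Ioi 0), ε ∈ Ioc (0:ℝ) 1 :=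
    Ioc_mem_nhdsGT_of_mem ⟨le_refl 0, zero_lt_one⟩
  have h2 : ∀ᶠ ε in nhdsWithin (0:ℝ) (Ioi 0), err ε < δ :=
    errTend.eventually_lt_const hδ
  filter_upwards [h1, h2] with ε hεm herr t ht
  rw [Real.dist_eq, abs_sub_comm]
  exact (key ε hεm t ht).trans_lt herr

/-- **Asymptotics of the cross-covariance of fBm with its driving Brownian motion.** For the
Molchan–Golosov fBm kernel `K` with `H > 1/2` and fixed `T > 0`,
`(1/ε) ∫_0^T (K(T+εt,u) - K(T,u)) du` converges, uniformly in `t ∈ [0,1]`, to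
`t (H-1/2) c_H [ ∫_0^T u^{1/2-H}(T^{H-3/2}(T-u)^{H-1/2} + T^{H-1/2}(T-u)^{H-3/2}) du
  - ∫_0^T u^{1/2-H}(T-u)^{H-1/2} T^{H-3/2} du ]`;
consequently `ε^{-H} ∫_0^T (K(T+εt,u) - K(T,u)) du → 0` uniformly in `t ∈ [0,1]`. -/
theorem fbm_cross_covariance_asymptotics
    (H : ℝ) (hH : H ∈ Set.Ioo (1/2 : ℝ) 1)
    (cH : ℝ)
    (hcH : cH = Real.sqrt (2 * H * Real.Gamma (3/2 - H) /
      (Real.Gamma (H + 1/2) * Real.Gamma (2 - 2 * H))))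
    (K : ℝ → ℝ → ℝ)
    (hK : ∀ t s : ℝ, 0 < s → s ≤ t →
      K t s = cH * ((t / s * (t - s)) ^ (H - 1/2) -
        (H - 1/2) * s ^ (1/2 - H) *
          ∫ u in Ioc s t, u ^ (H - 3/2) * (u - s) ^ (H - 1/2)))
    (T : ℝ) (hT : 0 < T) :
    TendstoUniformlyOn
      (fun ε (t : ℝ) => (1 / ε) * ∫ u in Ioc (0:ℝ) T, (K (T + ε * t) u - K T u))
      (fun t => t * (H - 1/2) * cH *
        ((∫ u in Ioc (0:ℝ) T, u ^ (1/2 - H) *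
            (T ^ (H - 3/2) * (T - u) ^ (H - 1/2) + T ^ (H - 1/2) * (T - u) ^ (H - 3/2))) -
         ∫ u in Ioc (0:ℝ) T, u ^ (1/2 - H) * (T - u) ^ (H - 1/2) * T ^ (H - 3/2)))
      (nhdsWithin 0 (Ioi 0)) (Icc (0:ℝ) 1) ∧
    TendstoUniformlyOn
      (fun ε (t : ℝ) => ε ^ (-H) * ∫ u in Ioc (0:ℝ) T, (K (T + ε * t) u - K T u))
      (fun _ => 0)
      (nhdsWithin 0 (Ioi 0)) (Icc (0:ℝ) 1) := by
  have hcH0 : 0 ≤ cH := hcH ▸ Real.sqrt_nonneg _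
  have aux := fbm_main_aux H hH cH hcH0 K hK T hT
  have hp1 : (-1:ℝ) < H - 1/2 := by linarith [hH.1]
  have hq1 : (-1:ℝ) < H - 3/2 := by linarith [hH.1]
  have hσ1 : (-1:ℝ) < 1/2 - H := by linarith [hH.2]
  have int1 : IntegrableOn (fun u : ℝ => u ^ (1/2 - H) * (T - u) ^ (H - 3/2)) (Ioo 0 T) :=
    betaInt' hT hσ1 hq1
  have int2 : IntegrableOn (fun u : ℝ => u ^ (1/2 - H) * (T - u) ^ (H - 1/2)) (Ioo 0 T) :=
    betaInt' hT hσ1 hp1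
  -- the limit functions coincide
  have hLeq : (fun t : ℝ => t * (H - 1/2) * cH *
        ((∫ u in Ioc (0:ℝ) T, u ^ (1/2 - H) *
            (T ^ (H - 3/2) * (T - u) ^ (H - 1/2) + T ^ (H - 1/2) * (T - u) ^ (H - 3/2))) -
         ∫ u in Ioc (0:ℝ) T, u ^ (1/2 - H) * (T - u) ^ (H - 1/2) * T ^ (H - 3/2))) =
      (fun t : ℝ => t * (cH * (H - 1/2) * (T ^ (H - 1/2) *
        ∫ u in Ioo (0:ℝ) T, u ^ (1/2 - H) * (T - u) ^ (H - 3/2)))) := by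
    funext t
    have eA : (∫ u in Ioc (0:ℝ) T, u ^ (1/2 - H) *
        (T ^ (H - 3/2) * (T - u) ^ (H - 1/2) + T ^ (H - 1/2) * (T - u) ^ (H - 3/2))) =
        T ^ (H - 3/2) * (∫ u in Ioo (0:ℝ) T, u ^ (1/2 - H) * (T - u) ^ (H - 1/2)) +
        T ^ (H - 1/2) * ∫ u in Ioo (0:ℝ) T, u ^ (1/2 - H) * (T - u) ^ (H - 3/2) := by
      rw [integral_Ioc_eq_integral_Ioo]
      have h1 : (fun u : ℝ => u ^ (1/2 - H) *
          (T ^ (H - 3/2) * (T - u) ^ (H - 1/2) + T ^ (H - 1/2) * (T - u) ^ (H - 3/2))) =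
          fun u : ℝ => T ^ (H - 3/2) * (u ^ (1/2 - H) * (T - u) ^ (H - 1/2)) +
            T ^ (H - 1/2) * (u ^ (1/2 - H) * (T - u) ^ (H - 3/2)) := by
        funext u; ring
      rw [h1, integral_add (int2.const_mul _) (int1.const_mul _),
        integral_const_mul, integral_const_mul]
    have eB : (∫ u in Ioc (0:ℝ) T, u ^ (1/2 - H) * (T - u) ^ (H - 1/2) * T ^ (H - 3/2)) =
        T ^ (H - 3/2) * ∫ u in Ioo (0:ℝ) T, u ^ (1/2 - H) * (T - u) ^ (H - 1/2) := by
      rw [integral_Ioc_eq_integral_Ioo]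
      have h1 : (fun u : ℝ => u ^ (1/2 - H) * (T - u) ^ (H - 1/2) * T ^ (H - 3/2)) =
          fun u : ℝ => T ^ (H - 3/2) * (u ^ (1/2 - H) * (T - u) ^ (H - 1/2)) := by
        funext u; ring
      rw [h1, integral_const_mul]
    rw [eA, eB]
    ring
  constructor
  · rw [hLeq]; exact aux
  · -- second part
    rw [Metric.tendstoUniformlyOn_iff]
    intro δ hδ
    set M : ℝ := |cH * (H - 1/2) * (T ^ (H - 1/2) *
      ∫ u in Ioo (0:ℝ) T, u ^ (1/2 - H) * (T - u) ^ (H - 3/2))| with hMdef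
    have h1 := (Metric.tendstoUniformlyOn_iff.1 aux) 1 one_pos
    have hpow : Tendsto (fun ε : ℝ => ε ^ (1 - H)) (nhdsWithin 0 (Ioi 0)) (nhds 0) := by
      have hc : ContinuousAt (fun x : ℝ => x ^ (1 - H)) 0 :=
        Real.continuousAt_rpow_const 0 (1 - H) (Or.inr (by linarith [hH.2]))
      have h := hc.tendsto
      rw [Real.zero_rpow (by intro h'; nlinarith [hH.2] : (1:ℝ) - H ≠ 0)] at h
      exact h.mono_left nhdsWithin_le_nhds
    have hsmall : ∀ᶠ ε in nhdsWithin (0:ℝ) (Ioi 0), ε ^ (1 - H) * (M + 1) < δ := by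
      have h := hpow.mul_const (M + 1)
      rw [zero_mul] at h
      exact h.eventually_lt_const hδ
    filter_upwards [h1, hsmall, self_mem_nhdsWithin] with ε hε1 hε2 hεm t ht
    have hε0 : 0 < ε := mem_Ioi.1 hεm
    have hbd : |(1 / ε) * ∫ u in Ioc (0:ℝ) T, (K (T + ε * t) u - K T u)| ≤ M + 1 := by
      have h := hε1 t ht
      rw [Real.dist_eq] at h
      have hL : |t * (cH * (H - 1/2) * (T ^ (H - 1/2) *
          ∫ u in Ioo (0:ℝ) T, u ^ (1/2 - H) * (T - u) ^ (H - 3/2)))| ≤ M := by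
        rw [abs_mul, hMdef]
        have ht1 : |t| ≤ 1 := abs_le.2 ⟨by linarith [ht.1], ht.2⟩
        nlinarith [abs_nonneg (cH * (H - 1/2) * (T ^ (H - 1/2) *
          ∫ u in Ioo (0:ℝ) T, u ^ (1/2 - H) * (T - u) ^ (H - 3/2)))]
      have e : |(1 / ε) * (∫ u in Ioc (0:ℝ) T, (K (T + ε * t) u - K T u)) -
          t * (cH * (H - 1/2) * (T ^ (H - 1/2) *
            ∫ u in Ioo (0:ℝ) T, u ^ (1/2 - H) * (T - u) ^ (H - 3/2)))| < 1 := by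
        rw [abs_sub_comm]; exact h
      have tri : |(1 / ε) * ∫ u in Ioc (0:ℝ) T, (K (T + ε * t) u - K T u)| ≤
          |(1 / ε) * (∫ u in Ioc (0:ℝ) T, (K (T + ε * t) u - K T u)) -
            t * (cH * (H - 1/2) * (T ^ (H - 1/2) *
              ∫ u in Ioo (0:ℝ) T, u ^ (1/2 - H) * (T - u) ^ (H - 3/2)))| +
          |t * (cH * (H - 1/2) * (T ^ (H - 1/2) *
              ∫ u in Ioo (0:ℝ) T, u ^ (1/2 - H) * (T - u) ^ (H - 3/2)))| := by
        have := abs_add_le ((1 / ε) * (∫ u in Ioc (0:ℝ) T, (K (T + ε * t) u - K T u)) -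
            t * (cH * (H - 1/2) * (T ^ (H - 1/2) *
              ∫ u in Ioo (0:ℝ) T, u ^ (1/2 - H) * (T - u) ^ (H - 3/2))))
          (t * (cH * (H - 1/2) * (T ^ (H - 1/2) *
              ∫ u in Ioo (0:ℝ) T, u ^ (1/2 - H) * (T - u) ^ (H - 3/2))))
        simpa using this
      linarith
    have hID : ε ^ (-H) * (∫ u in Ioc (0:ℝ) T, (K (T + ε * t) u - K T u)) =
        ε ^ (1 - H) * ((1 / ε) * ∫ u in Ioc (0:ℝ) T, (K (T + ε * t) u - K T u)) := by
      rw [← mul_assoc]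
      congr 1
      rw [one_div, ← Real.rpow_neg_one ε, ← Real.rpow_add hε0]
      congr 1
      ring
    rw [Real.dist_eq, hID]
    have hpn : (0:ℝ) ≤ ε ^ (1 - H) := Real.rpow_nonneg hε0.le _
    calc |0 - ε ^ (1 - H) * ((1 / ε) * ∫ u in Ioc (0:ℝ) T, (K (T + ε * t) u - K T u))| =
        ε ^ (1 - H) * |(1 / ε) * ∫ u in Ioc (0:ℝ) T, (K (T + ε * t) u - K T u)| := by
          rw [zero_sub, abs_neg, abs_mul, abs_of_nonneg hpn]
      _ ≤ ε ^ (1 - H) * (M + 1) := mul_le_mul_of_nonneg_left hbd hpn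
      _ < δ := hε2
end
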